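/- arXiv:2409.09569 — 4 statements merged into one kernel-verified Lean document; each statement's English description precedes it below -/
import Mathlib

section
/- Let (Ω, 𝒜) be a measurable space and let p_b, p_1, …, p_k (k ≥ 2) be probability measures on Ω, where p_b is the image distribution generated from the base prompt b and p_j is the image distribution generated from the prompt with attribute a_j attached. Let T, L > 0, δ ≥ 0, ε > 0 and v_1, …, v_k > 0 with ε < (min_i v_i)/2. Suppose: (i) KL(p_b ‖ p_1) ≤ T·L²·δ² (the Girsanov bound for a denoising-score function that is L-Lipschitz in the prompt embedding, where δ = ‖e_P(b) − e_P(a_1+b)‖ is the distance between the prompt embeddings); (ii) δ ≤ ε/(√T·L) (the embedding of b is ε/(√T L)-close to a_1); and (iii) TV(p_i, p_j) ≥ 1 − ε for all distinct i, j ∈ {1,…,k} (distinct categories of identifiers). Then TV(p_b, p_1) ≤ ε, and for every j ≠ 1 one has TV(p_b, p_j) ≥ 1 − 2ε > 1 − min_i v_i; in particular the model is not representationally balanced with constants (v_i). -/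
open Real Set


open MeasureTheory
open scoped ENNReal

/-- Total variation distance between two measures:
the supremum over measurable sets `s` of `|μ s - ν s|`. -/
noncomputable def tvDist {Ω : Type*} [MeasurableSpace Ω] (μ ν : Measure Ω) : ℝ :=
  ⨆ s : {s : Set Ω // MeasurableSet s}, |(μ s.1).toReal - (ν s.1).toReal|

/- Kullback–Leibler divergence between two measures, valued in `ℝ≥0∞`:
`∫ log (dμ/dν) dμ` when `μ ≪ ν` and the log-likelihood ratio is integrable, `∞` otherwise. -/
open Classical in
noncomputable def klDiv {Ω : Type*} [MeasurableSpace Ω] (μ ν : Measure Ω) : ℝ≥0∞ :=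
  if μ ≪ ν ∧ Integrable (llr μ ν) μ then ENNReal.ofReal (∫ x, llr μ ν x ∂μ) else ⊤



private lemma myH_deriv {x : ℝ} (hx : 0 < x) :
    HasDerivAt (fun y : ℝ => (y + 1) * Real.log y - 2 * (y - 1))
      (Real.log x + (x + 1) * x⁻¹ - 2) x := by
  have h1 : HasDerivAt (fun y : ℝ => (y + 1) * Real.log y)
      (1 * Real.log x + (x + 1) * x⁻¹) x :=
    (((hasDerivAt_id x).add_const 1)).mul (Real.hasDerivAt_log hx.ne')
  have h2 : HasDerivAt (fun y : ℝ => 2 * (y - 1)) 2 x := by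
    simpa using ((hasDerivAt_id x).sub_const 1).const_mul 2
  exact (h1.sub h2).congr_deriv (by ring)

private lemma myH_deriv_nonneg {x : ℝ} (hx : 0 < x) :
    0 ≤ Real.log x + (x + 1) * x⁻¹ - 2 := by
  have h := Real.one_sub_inv_le_log_of_pos hx
  have : (x + 1) * x⁻¹ = 1 + x⁻¹ := by field_simp
  linarith

private lemma myH_mono : MonotoneOn (fun y : ℝ => (y + 1) * Real.log y - 2 * (y - 1)) (Ioi 0) := by
  refine monotoneOn_of_deriv_nonneg (convex_Ioi 0) (fun y hy => ?_) (fun y hy => ?_) (fun y hy => ?_)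
  · exact (myH_deriv hy).continuousAt.continuousWithinAt
  · rw [interior_Ioi] at hy
    exact (myH_deriv hy).differentiableAt.differentiableWithinAt
  · rw [interior_Ioi] at hy
    rw [(myH_deriv hy).deriv]
    exact myH_deriv_nonneg hy

private lemma myH_nonneg {x : ℝ} (hx : 1 ≤ x) :
    0 ≤ (x + 1) * Real.log x - 2 * (x - 1) := by
  have := myH_mono (mem_Ioi.mpr one_pos) (mem_Ioi.mpr (lt_of_lt_of_le one_pos hx)) hx
  simpa using this

private lemma myH_nonpos {x : ℝ} (hx0 : 0 < x) (hx : x ≤ 1) :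
    (x + 1) * Real.log x - 2 * (x - 1) ≤ 0 := by
  have := myH_mono (mem_Ioi.mpr hx0) (mem_Ioi.mpr one_pos) hx
  simpa using this

private lemma myG_deriv {x : ℝ} (hx : 0 < x) :
    HasDerivAt (fun y : ℝ => (2 * y ^ 2 + 4 * y) * Real.log y - (5 * y ^ 2 - 4 * y - 1))
      (4 * ((x + 1) * Real.log x - 2 * (x - 1))) x := by
  have h1 : HasDerivAt (fun y : ℝ => (2 * y ^ 2 + 4 * y) * Real.log y)
      ((4 * x + 4) * Real.log x + (2 * x ^ 2 + 4 * x) * x⁻¹) x := by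
    have ha : HasDerivAt (fun y : ℝ => 2 * y ^ 2 + 4 * y) (4 * x + 4) x := by
      have := ((hasDerivAt_pow 2 x).const_mul 2).add ((hasDerivAt_id x).const_mul 4)
      exact this.congr_deriv (by ring)
    exact ha.mul (Real.hasDerivAt_log hx.ne')
  have h2 : HasDerivAt (fun y : ℝ => 5 * y ^ 2 - 4 * y - 1) (10 * x - 4) x := by
    have := (((hasDerivAt_pow 2 x).const_mul 5).sub ((hasDerivAt_id x).const_mul 4)).sub_const 1
    simpa using this.congr_deriv (by ring)
  have hxx : (2 * x ^ 2 + 4 * x) * x⁻¹ = 2 * x + 4 := by field_simp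
  refine (h1.sub h2).congr_deriv ?_
  rw [hxx]; ring

private lemma myG_nonneg {x : ℝ} (hx : 0 < x) :
    0 ≤ (2 * x ^ 2 + 4 * x) * Real.log x - (5 * x ^ 2 - 4 * x - 1) := by
  set G : ℝ → ℝ := fun y => (2 * y ^ 2 + 4 * y) * Real.log y - (5 * y ^ 2 - 4 * y - 1) with hG
  have hG1 : G 1 = 0 := by simp [hG]; norm_num
  rcases le_or_gt 1 x with h1 | h1
  · have hmono : MonotoneOn G (Ici 1) := by
      refine monotoneOn_of_deriv_nonneg (convex_Ici 1) (fun y hy => ?_) (fun y hy => ?_)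
        (fun y hy => ?_)
      · exact (myG_deriv (lt_of_lt_of_le one_pos hy)).continuousAt.continuousWithinAt
      · rw [interior_Ici] at hy
        exact (myG_deriv (lt_trans one_pos hy)).differentiableAt.differentiableWithinAt
      · rw [interior_Ici] at hy
        rw [(myG_deriv (lt_trans one_pos hy)).deriv]
        have := myH_nonneg (le_of_lt hy)
        linarith
    have := hmono (self_mem_Ici) h1 h1
    rw [hG1] at this; exact this
  · have hanti : AntitoneOn G (Ioc 0 1) := by
      refine antitoneOn_of_deriv_nonpos (convex_Ioc 0 1) (fun y hy => ?_) (fun y hy => ?_)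
        (fun y hy => ?_)
      · exact (myG_deriv hy.1).continuousAt.continuousWithinAt
      · rw [interior_Ioc] at hy
        exact (myG_deriv hy.1).differentiableAt.differentiableWithinAt
      · rw [interior_Ioc] at hy
        rw [(myG_deriv hy.1).deriv]
        have := myH_nonpos hy.1 (le_of_lt hy.2)
        linarith
    have := hanti ⟨hx, le_of_lt h1⟩ ⟨one_pos, le_refl 1⟩ (le_of_lt h1)
    rw [hG1] at this; exact this

/-- Pinsker's pointwise inequality. -/
private lemma pinsker_pointwise {x : ℝ} (hx : 0 ≤ x) :
    3 * (x - 1) ^ 2 ≤ (2 * x + 4) * (x * Real.log x - x + 1) := by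
  rcases eq_or_lt_of_le hx with rfl | hx'
  · simp; norm_num
  · have hG := myG_nonneg hx'
    nlinarith [hG]

private lemma tv_term_le_one {Ω : Type*} [MeasurableSpace Ω] (μ ν : Measure Ω)
    [IsProbabilityMeasure μ] [IsProbabilityMeasure ν] (s : {s : Set Ω // MeasurableSet s}) :
    |(μ s.1).toReal - (ν s.1).toReal| ≤ 1 := by
  have h1 : (μ s.1).toReal ≤ 1 := by
    calc (μ s.1).toReal ≤ (μ Set.univ).toReal :=
          ENNReal.toReal_mono (measure_ne_top _ _) (measure_mono (Set.subset_univ _))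
      _ = 1 := by simp
  have h2 : (ν s.1).toReal ≤ 1 := by
    calc (ν s.1).toReal ≤ (ν Set.univ).toReal :=
          ENNReal.toReal_mono (measure_ne_top _ _) (measure_mono (Set.subset_univ _))
      _ = 1 := by simp
  have h3 : (0:ℝ) ≤ (μ s.1).toReal := ENNReal.toReal_nonneg
  have h4 : (0:ℝ) ≤ (ν s.1).toReal := ENNReal.toReal_nonneg
  rw [abs_le]; constructor <;> linarith

private lemma le_tvDist {Ω : Type*} [MeasurableSpace Ω] (μ ν : Measure Ω)
    [IsProbabilityMeasure μ] [IsProbabilityMeasure ν] {s : Set Ω} (hs : MeasurableSet s) :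
    |(μ s).toReal - (ν s).toReal| ≤ tvDist μ ν :=
  le_ciSup (f := fun s : {s : Set Ω // MeasurableSet s} => |(μ s.1).toReal - (ν s.1).toReal|)
    ⟨1, by rintro x ⟨t, rfl⟩; exact tv_term_le_one μ ν t⟩ ⟨s, hs⟩

private lemma tvDist_le_of_forall {Ω : Type*} [MeasurableSpace Ω] {μ ν : Measure Ω} {c : ℝ}
    (h : ∀ s : Set Ω, MeasurableSet s → |(μ s).toReal - (ν s).toReal| ≤ c) :
    tvDist μ ν ≤ c := by
  have : Nonempty {s : Set Ω // MeasurableSet s} := ⟨⟨∅, MeasurableSet.empty⟩⟩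
  exact ciSup_le fun s => h s.1 s.2

private lemma tvDist_comm {Ω : Type*} [MeasurableSpace Ω] (μ ν : Measure Ω) :
    tvDist μ ν = tvDist ν μ := by
  unfold tvDist; congr 1; funext s; rw [abs_sub_comm]

private lemma tvDist_triangle {Ω : Type*} [MeasurableSpace Ω] (μ ν ρ : Measure Ω)
    [IsProbabilityMeasure μ] [IsProbabilityMeasure ν] [IsProbabilityMeasure ρ] :
    tvDist μ ρ ≤ tvDist μ ν + tvDist ν ρ := by
  refine tvDist_le_of_forall fun s hs => ?_
  calc |(μ s).toReal - (ρ s).toReal|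
      ≤ |(μ s).toReal - (ν s).toReal| + |(ν s).toReal - (ρ s).toReal| := abs_sub_le _ _ _
    _ ≤ tvDist μ ν + tvDist ν ρ := add_le_add (le_tvDist μ ν hs) (le_tvDist ν ρ hs)

private lemma pinsker_tv {Ω : Type*} [MeasurableSpace Ω] (μ ν : Measure Ω)
    [IsProbabilityMeasure μ] [IsProbabilityMeasure ν]
    (hac : μ ≪ ν) (hint : Integrable (llr μ ν) μ) {c : ℝ} (hc : 0 ≤ c)
    (hI : ∫ x, llr μ ν x ∂μ ≤ c ^ 2) :
    tvDist μ ν ≤ c := by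
  set g : Ω → ℝ := fun x => (μ.rnDeriv ν x).toReal with hg_def
  have hg_meas : Measurable g := (Measure.measurable_rnDeriv μ ν).ennreal_toReal
  have hg_nonneg : ∀ x, 0 ≤ g x := fun x => ENNReal.toReal_nonneg
  have hg_int : Integrable g ν := Measure.integrable_toReal_rnDeriv
  have hg_one : ∫ x, g x ∂ν = 1 := by
    rw [hg_def, Measure.integral_toReal_rnDeriv hac]; simp
  have hgl_int : Integrable (fun x => g x * Real.log (g x)) ν := by
    have := (integrable_rnDeriv_smul_iff hac).mpr hint
    simpa [llr_def, smul_eq_mul] using this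
  have hgl : ∫ x, g x * Real.log (g x) ∂ν = ∫ x, llr μ ν x ∂μ := by
    rw [← integral_rnDeriv_smul hac]
    simp [llr_def, smul_eq_mul]; rfl
  -- the weight functions
  set u : Ω → ℝ := fun x => Real.sqrt ((2 * g x + 4) / 3) with hu_def
  have hbase_pos : ∀ x, (0:ℝ) < (2 * g x + 4) / 3 := fun x => by
    have := hg_nonneg x; positivity
  have hu_pos : ∀ x, 0 < u x := fun x => Real.sqrt_pos.mpr (hbase_pos x)
  have hu_sq : ∀ x, u x ^ 2 = (2 * g x + 4) / 3 := fun x => Real.sq_sqrt (hbase_pos x).le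
  set w : Ω → ℝ := fun x => |g x - 1| / u x with hw_def
  have huw : ∀ x, u x * w x = |g x - 1| := fun x => by
    rw [hw_def]; field_simp [(hu_pos x).ne']
  have hw_nonneg : ∀ x, 0 ≤ w x := fun x => div_nonneg (abs_nonneg _) (hu_pos x).le
  have hw_sq_le : ∀ x, w x ^ 2 ≤ g x * Real.log (g x) - g x + 1 := by
    intro x
    have hkey := pinsker_pointwise (hg_nonneg x)
    have : w x ^ 2 = (g x - 1) ^ 2 / ((2 * g x + 4) / 3) := by
      rw [hw_def, div_pow, sq_abs, hu_sq]
    rw [this, div_le_iff₀ (hbase_pos x)]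
    nlinarith [hkey]
  have hu_meas : Measurable u := (((hg_meas.const_mul 2).add_const 4).div_const 3).sqrt
  have hw_meas : Measurable w := ((hg_meas.sub_const 1).abs).div hu_meas
  have husq_int : Integrable (fun x => u x ^ 2) ν := by
    have h1 : Integrable (fun x => (2 * g x + 4) / 3) ν :=
      ((hg_int.const_mul 2).add (integrable_const 4)).div_const 3
    exact h1.congr (Filter.Eventually.of_forall fun x => (hu_sq x).symm)
  have hh_int : Integrable (fun x => g x * Real.log (g x) - g x + 1) ν :=
    (hgl_int.sub hg_int).add (integrable_const 1)
  have hwsq_int : Integrable (fun x => w x ^ 2) ν := by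
    refine hh_int.mono' ((hw_meas.pow_const 2).aestronglyMeasurable)
      (Filter.Eventually.of_forall fun x => ?_)
    rw [Real.norm_of_nonneg (sq_nonneg _)]
    exact hw_sq_le x
  -- Cauchy-Schwarz
  have hpq : (2:ℝ).HolderConjugate 2 := Real.HolderConjugate.two_two
  have h2e : ENNReal.ofReal (2:ℝ) = 2 := by
    rw [ENNReal.ofReal_ofNat]
  have hu_mem : MemLp u (ENNReal.ofReal (2:ℝ)) ν := by
    rw [h2e]
    exact (memLp_two_iff_integrable_sq hu_meas.aestronglyMeasurable).mpr husq_int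
  have hw_mem : MemLp w (ENNReal.ofReal (2:ℝ)) ν := by
    rw [h2e]
    exact (memLp_two_iff_integrable_sq hw_meas.aestronglyMeasurable).mpr hwsq_int
  have hCS := integral_mul_le_Lp_mul_Lq_of_nonneg hpq
    (Filter.Eventually.of_forall fun x => (hu_pos x).le)
    (Filter.Eventually.of_forall hw_nonneg) hu_mem hw_mem
  have hrpow : ∀ r : ℝ, r ^ (2:ℝ) = r ^ 2 := fun r => by
    rw [show (2:ℝ) = ((2:ℕ):ℝ) by norm_num, Real.rpow_natCast]
  simp_rw [hrpow] at hCS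
  -- compute ∫ u^2 = 2
  have husq : ∫ x, u x ^ 2 ∂ν = 2 := by
    simp_rw [hu_sq]
    rw [integral_div, integral_add (hg_int.const_mul 2) (integrable_const 4),
      integral_const_mul, hg_one, integral_const]
    simp
    norm_num
  -- bound ∫ w^2
  have hwsq_le : ∫ x, w x ^ 2 ∂ν ≤ c ^ 2 := by
    calc ∫ x, w x ^ 2 ∂ν ≤ ∫ x, (g x * Real.log (g x) - g x + 1) ∂ν :=
          integral_mono hwsq_int hh_int hw_sq_le
      _ = (∫ x, g x * Real.log (g x) ∂ν - ∫ x, g x ∂ν) + 1 := by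
          have hfg : Integrable (fun x => g x * Real.log (g x) - g x) ν := hgl_int.sub hg_int
          rw [integral_add hfg (integrable_const 1), integral_sub hgl_int hg_int]
          simp
      _ = ∫ x, llr μ ν x ∂μ := by rw [hgl, hg_one]; ring
      _ ≤ c ^ 2 := hI
  have hwsq_nonneg : 0 ≤ ∫ x, w x ^ 2 ∂ν :=
    integral_nonneg fun x => sq_nonneg _
  -- total bound on ∫ |g - 1|
  have hS : ∫ x, |g x - 1| ∂ν ≤ Real.sqrt 2 * c := by
    have h1 : ∫ x, |g x - 1| ∂ν = ∫ x, u x * w x ∂ν := by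
      simp_rw [huw]
    rw [h1]
    calc ∫ x, u x * w x ∂ν
        ≤ (∫ x, u x ^ 2 ∂ν) ^ ((1:ℝ)/2) * (∫ x, w x ^ 2 ∂ν) ^ ((1:ℝ)/2) := hCS
      _ = Real.sqrt (∫ x, u x ^ 2 ∂ν) * Real.sqrt (∫ x, w x ^ 2 ∂ν) := by
          rw [← Real.sqrt_eq_rpow, ← Real.sqrt_eq_rpow]
      _ ≤ Real.sqrt 2 * Real.sqrt (c ^ 2) := by
          rw [husq]
          exact mul_le_mul_of_nonneg_left (Real.sqrt_le_sqrt hwsq_le) (Real.sqrt_nonneg 2)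
      _ = Real.sqrt 2 * c := by rw [Real.sqrt_sq hc]
  -- conclude
  have hD_int : Integrable (fun x => g x - 1) ν := hg_int.sub (integrable_const 1)
  have hDabs_int : Integrable (fun x => |g x - 1|) ν := hD_int.abs
  have htot : ∫ x, (g x - 1) ∂ν = 0 := by
    rw [integral_sub hg_int (integrable_const 1), hg_one]
    simp
  have hsqrt2 : Real.sqrt 2 ≤ 2 := by
    nlinarith [Real.sq_sqrt (by norm_num : (0:ℝ) ≤ 2), Real.sqrt_nonneg 2]
  refine tvDist_le_of_forall fun s hs => ?_
  have hset : (μ s).toReal - (ν s).toReal = ∫ x in s, (g x - 1) ∂ν := by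
    rw [integral_sub hg_int.integrableOn (integrable_const 1).integrableOn,
      Measure.setIntegral_toReal_rnDeriv hac s]
    simp; rfl
  have hsplit : ∫ x in s, (g x - 1) ∂ν + ∫ x in sᶜ, (g x - 1) ∂ν = 0 := by
    rw [integral_add_compl hs hD_int, htot]
  have habs1 : |∫ x in s, (g x - 1) ∂ν| ≤ ∫ x in s, |g x - 1| ∂ν := by
    simpa [Real.norm_eq_abs] using
      norm_integral_le_integral_norm (μ := ν.restrict s) (fun x => g x - 1)
  have habs2 : |∫ x in sᶜ, (g x - 1) ∂ν| ≤ ∫ x in sᶜ, |g x - 1| ∂ν := by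
    simpa [Real.norm_eq_abs] using
      norm_integral_le_integral_norm (μ := ν.restrict sᶜ) (fun x => g x - 1)
  have hsum : ∫ x in s, |g x - 1| ∂ν + ∫ x in sᶜ, |g x - 1| ∂ν = ∫ x, |g x - 1| ∂ν :=
    integral_add_compl hs hDabs_int
  have heq : |∫ x in s, (g x - 1) ∂ν| = |∫ x in sᶜ, (g x - 1) ∂ν| := by
    have : ∫ x in s, (g x - 1) ∂ν = -∫ x in sᶜ, (g x - 1) ∂ν := by linarith
    rw [this, abs_neg]
  rw [hset]
  have : 2 * |∫ x in s, (g x - 1) ∂ν| ≤ Real.sqrt 2 * c := by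
    calc 2 * |∫ x in s, (g x - 1) ∂ν|
        = |∫ x in s, (g x - 1) ∂ν| + |∫ x in sᶜ, (g x - 1) ∂ν| := by rw [← heq]; ring
      _ ≤ ∫ x, |g x - 1| ∂ν := by linarith
      _ ≤ Real.sqrt 2 * c := hS
  nlinarith [abs_nonneg (∫ x in s, (g x - 1) ∂ν), Real.sqrt_nonneg 2]

/-- **Bias in embeddings implies bias in image generations** (Theorem 4.1).
`pb` is the image distribution for the base prompt `b`, and `p j` is the image
distribution for the prompt with attribute `a_j` attached (attribute `⟨0, _⟩` playing
the role of `a_1`). Under the Girsanov KL bound (with `δ = ‖e_P(b) − e_P(a_1+b)‖`),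
`ε/(√T·L)`-closeness of the embedding of `b` to `a_1`, and distinctness of the
attribute categories, the generations are biased: `TV(p_b, p_1) ≤ ε` while
`TV(p_b, p_j) ≥ 1 − 2ε > 1 − min_i v_i` for `j ≠ 1`; in particular the model is
not representationally balanced with constants `(v_i)`. -/
theorem biased_embeddings_biased_generations {Ω : Type*} [MeasurableSpace Ω]
    (k : ℕ) (hk : 2 ≤ k)
    (pb : Measure Ω) (p : Fin k → Measure Ω)
    [IsProbabilityMeasure pb] [∀ j, IsProbabilityMeasure (p j)]
    (T L δ ε : ℝ) (v : Fin k → ℝ)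
    (hT : 0 < T) (hL : 0 < L) (hδ : 0 ≤ δ) (hε : 0 < ε)
    (hv : ∀ i, 0 < v i) (hεv : ε < (⨅ i, v i) / 2)
    (hKL : klDiv pb (p ⟨0, by omega⟩) ≤ ENNReal.ofReal (T * L ^ 2 * δ ^ 2))
    (hclose : δ ≤ ε / (Real.sqrt T * L))
    (hdistinct : ∀ i j : Fin k, i ≠ j → 1 - ε ≤ tvDist (p i) (p j)) :
    tvDist pb (p ⟨0, by omega⟩) ≤ ε ∧
    (∀ j : Fin k, j ≠ ⟨0, by omega⟩ →
      1 - 2 * ε ≤ tvDist pb (p j) ∧ 1 - 2 * ε > 1 - ⨅ i, v i) ∧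
    ¬ (∀ i : Fin k, tvDist pb (p i) ≤ 1 - v i) := by
  
  haveI : Nonempty (Fin k) := ⟨⟨0, by omega⟩⟩
  unfold klDiv at hKL
  split_ifs at hKL with hcase
  swap
  · exact absurd (top_le_iff.mp hKL) ENNReal.ofReal_ne_top
  obtain ⟨hac, hint⟩ := hcase
  have hI : ∫ x, llr pb (p ⟨0, by omega⟩) x ∂pb ≤ ε ^ 2 := by
    have h1 : T * L ^ 2 * δ ^ 2 ≤ ε ^ 2 := by
      have h2 : δ ^ 2 ≤ (ε / (Real.sqrt T * L)) ^ 2 := pow_le_pow_left₀ hδ hclose 2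
      have h3 : (ε / (Real.sqrt T * L)) ^ 2 = ε ^ 2 / (T * L ^ 2) := by
        rw [div_pow, mul_pow, Real.sq_sqrt hT.le]
      have hTL : 0 < T * L ^ 2 := by positivity
      rw [h3] at h2
      calc T * L ^ 2 * δ ^ 2 ≤ T * L ^ 2 * (ε ^ 2 / (T * L ^ 2)) := by nlinarith
        _ = ε ^ 2 := by field_simp
    have h4 := hKL.trans (ENNReal.ofReal_le_ofReal h1)
    exact (ENNReal.ofReal_le_ofReal_iff (by positivity)).mp h4
  have htv1 : tvDist pb (p ⟨0, by omega⟩) ≤ ε := pinsker_tv _ _ hac hint hε.le hI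
  have hinf_le : ∀ i, (⨅ i, v i) ≤ v i := fun i => ciInf_le (Set.finite_range v).bddBelow i
  have h2e : 2 * ε < ⨅ i, v i := by linarith
  have hlow : ∀ j : Fin k, j ≠ ⟨0, by omega⟩ → 1 - 2 * ε ≤ tvDist pb (p j) := by
    intro j hj
    have htri := tvDist_triangle (p ⟨0, by omega⟩) pb (p j)
    have hd := hdistinct ⟨0, by omega⟩ j (Ne.symm hj)
    have hcomm : tvDist (p ⟨0, by omega⟩) pb = tvDist pb (p ⟨0, by omega⟩) :=
      tvDist_comm _ _
    linarith
  refine ⟨htv1, fun j hj => ⟨hlow j hj, by linarith⟩, fun hbal => ?_⟩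
  have hj : (⟨1, by omega⟩ : Fin k) ≠ ⟨0, by omega⟩ := by simp [Fin.ext_iff]
  have h5 := hlow ⟨1, by omega⟩ hj
  have h6 := hbal ⟨1, by omega⟩
  have h7 := hinf_le ⟨1, by omega⟩
  linarith
end

section
/- Let I be a measurable space, let μ_1, …, μ_k be probability measures on I, and let s, s* : I → [0, 1] be measurable with ∫ s* dμ_ℓ = s̄ and |∫ (s* − s) dμ_ℓ| ≤ α for every ℓ ∈ {1,…,k}. Let p_1,…,p_k ≥ 0 and p'_1,…,p'_k ≥ 0 be two weight vectors each summing to 1, and set μ = Σ_ℓ p_ℓ·μ_ℓ and μ' = Σ_ℓ p'_ℓ·μ_ℓ. Then |∫ s dμ − ∫ s dμ'| ≤ 2α; that is, the alignment scores assigned to the two models differ by at most 2α irrespective of the mixing probabilities. -/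
open MeasureTheory
open scoped ENNReal

/-- **Corollary to Theorem 5.2.** Under multiaccuracy of the auditor `s` and equal
average true alignment `sbar` across the attribute image-distributions `μ ℓ`, two
models that mix over the attributes with arbitrary (possibly different) weight
vectors `p` and `p'` receive alignment scores within `2α` of each other. -/
theorem multiaccurate_score_stable_two_models {I : Type*} [MeasurableSpace I]
    (k : ℕ) (μ : Fin k → Measure I) [∀ ℓ, IsProbabilityMeasure (μ ℓ)]
    (s sStar : I → ℝ) (hs : Measurable s) (hsStar : Measurable sStar)
    (hs01 : ∀ i, s i ∈ Set.Icc (0 : ℝ) 1) (hsStar01 : ∀ i, sStar i ∈ Set.Icc (0 : ℝ) 1)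
    (sbar α : ℝ)
    (htrue : ∀ ℓ, ∫ i, sStar i ∂(μ ℓ) = sbar)
    (hma : ∀ ℓ, |∫ i, (sStar i - s i) ∂(μ ℓ)| ≤ α)
    (p p' : Fin k → ℝ) (hp : ∀ ℓ, 0 ≤ p ℓ) (hp' : ∀ ℓ, 0 ≤ p' ℓ)
    (hpsum : ∑ ℓ, p ℓ = 1) (hpsum' : ∑ ℓ, p' ℓ = 1) :
    |∫ i, s i ∂(∑ ℓ, ENNReal.ofReal (p ℓ) • μ ℓ) -
      ∫ i, s i ∂(∑ ℓ, ENNReal.ofReal (p' ℓ) • μ ℓ)| ≤ 2 * α := by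
  have hsint : ∀ ℓ, Integrable s (μ ℓ) := fun ℓ =>
    (integrable_const (1 : ℝ)).mono' hs.aestronglyMeasurable
      (Filter.Eventually.of_forall fun i => by
        have := hs01 i; rw [Real.norm_eq_abs, abs_le]; constructor <;> linarith [this.1, this.2])
  have hsStarint : ∀ ℓ, Integrable sStar (μ ℓ) := fun ℓ =>
    (integrable_const (1 : ℝ)).mono' hsStar.aestronglyMeasurable
      (Filter.Eventually.of_forall fun i => by
        have := hsStar01 i; rw [Real.norm_eq_abs, abs_le]; constructor <;> linarith [this.1, this.2])
  -- each ∫ s dμℓ = sbar - dℓ with |dℓ| ≤ α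
  set d : Fin k → ℝ := fun ℓ => ∫ i, (sStar i - s i) ∂(μ ℓ) with hd
  have hval : ∀ ℓ, ∫ i, s i ∂(μ ℓ) = sbar - d ℓ := by
    intro ℓ
    have : d ℓ = (∫ i, sStar i ∂(μ ℓ)) - ∫ i, s i ∂(μ ℓ) :=
      integral_sub (hsStarint ℓ) (hsint ℓ)
    rw [this, htrue ℓ]; ring
  have key : ∀ q : Fin k → ℝ, (∀ ℓ, 0 ≤ q ℓ) →
      ∫ i, s i ∂(∑ ℓ, ENNReal.ofReal (q ℓ) • μ ℓ) = ∑ ℓ, q ℓ * ∫ i, s i ∂(μ ℓ) := by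
    intro q hq
    rw [integral_finset_sum_measure (fun ℓ _ => ((hsint ℓ).smul_measure ENNReal.ofReal_ne_top))]
    refine Finset.sum_congr rfl fun ℓ _ => ?_
    rw [integral_smul_measure, ENNReal.toReal_ofReal (hq ℓ), smul_eq_mul]
  have hwsum : ∀ (q : Fin k → ℝ), (∀ ℓ, 0 ≤ q ℓ) → (∑ ℓ, q ℓ = 1) →
      |∑ ℓ, q ℓ * d ℓ| ≤ α := by
    intro q hq hq1
    calc |∑ ℓ, q ℓ * d ℓ| ≤ ∑ ℓ, |q ℓ * d ℓ| := Finset.abs_sum_le_sum_abs _ _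
      _ ≤ ∑ ℓ, q ℓ * α := by
          refine Finset.sum_le_sum fun ℓ _ => ?_
          rw [abs_mul, abs_of_nonneg (hq ℓ)]
          exact mul_le_mul_of_nonneg_left (hma ℓ) (hq ℓ)
      _ = α := by rw [← Finset.sum_mul, hq1, one_mul]
  rw [key p hp, key p' hp']
  have heq : ∀ (q : Fin k → ℝ), (∑ ℓ, q ℓ = 1) →
      ∑ ℓ, q ℓ * ∫ i, s i ∂(μ ℓ) = sbar - ∑ ℓ, q ℓ * d ℓ := by
    intro q hq1
    simp only [hval, mul_sub, Finset.sum_sub_distrib, ← Finset.sum_mul, hq1, one_mul]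
  rw [heq p hpsum, heq p' hpsum']
  have h1 := hwsum p hp hpsum
  have h2 := hwsum p' hp' hpsum'
  calc |(sbar - ∑ ℓ, p ℓ * d ℓ) - (sbar - ∑ ℓ, p' ℓ * d ℓ)|
      = |(∑ ℓ, p' ℓ * d ℓ) - ∑ ℓ, p ℓ * d ℓ| := by ring_nf
    _ ≤ |∑ ℓ, p' ℓ * d ℓ| + |∑ ℓ, p ℓ * d ℓ| := abs_sub _ _
    _ ≤ 2 * α := by linarith
end

section
/- Let E be a real inner product space, let u ∈ E with ‖u‖ = 1 (the embedding e_P(b) of a prompt b), and let e : I → E be a measurable map from a measurable space I of images into the unit sphere of E (the image embedding e_I). Define the auditing function s(i) = (⟪u, e(i)⟫ + 1)/2 ∈ [0,1]. Let μ_1, μ_2 be probability measures on I and s* : I → [0,1] a measurable true alignment score. If |∫ (s* − s) dμ_ℓ| ≤ α for ℓ = 1, 2 (multiaccuracy) and ∫ s* dμ_1 = ∫ s* dμ_2, then |∫ ⟪u, e(i)⟫ dμ_1(i) − ∫ ⟪u, e(i)⟫ dμ_2(i)| ≤ 4α. -/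
open MeasureTheory
open scoped RealInnerProductSpace

/-- **Theorem 5.3.** Let `u = e_P(b)` be the (unit) prompt embedding and `e = e_I`
the image embedding into the unit sphere, and let `s(i) = (⟪u, e i⟫ + 1)/2` be the
derived auditing function. If `s` is `α`-multiaccurate on `μ₁, μ₂` (w.r.t. the true
alignment score `sStar`) and the two image distributions have equal average true
alignment, then their average cosine similarities to the prompt embedding differ
by at most `4α`. -/
theorem multiaccuracy_forces_equal_cosine
    {E : Type*} [NormedAddCommGroup E] [InnerProductSpace ℝ E]
    [MeasurableSpace E] [BorelSpace E]
    {I : Type*} [MeasurableSpace I]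
    (u : E) (hu : ‖u‖ = 1)
    (e : I → E) (he : Measurable e) (heunit : ∀ i, ‖e i‖ = 1)
    (μ₁ μ₂ : Measure I) [IsProbabilityMeasure μ₁] [IsProbabilityMeasure μ₂]
    (sStar : I → ℝ) (hsStar : Measurable sStar)
    (hsStar01 : ∀ i, sStar i ∈ Set.Icc (0 : ℝ) 1)
    (α : ℝ)
    (hma₁ : |∫ i, (sStar i - (⟪u, e i⟫ + 1) / 2) ∂μ₁| ≤ α)
    (hma₂ : |∫ i, (sStar i - (⟪u, e i⟫ + 1) / 2) ∂μ₂| ≤ α)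
    (heq : ∫ i, sStar i ∂μ₁ = ∫ i, sStar i ∂μ₂) :
    |(∫ i, ⟪u, e i⟫ ∂μ₁) - ∫ i, ⟪u, e i⟫ ∂μ₂| ≤ 4 * α := by
  set f : I → ℝ := fun i => ⟪u, e i⟫ with hf
  have hfm : Measurable f := (((innerSL ℝ u).continuous.measurable).comp he : Measurable fun i => ⟪u, e i⟫)
  have hfb : ∀ i, |f i| ≤ 1 := by
    intro i
    calc |f i| = ‖⟪u, e i⟫‖ := rfl
    _ ≤ ‖u‖ * ‖e i‖ := norm_inner_le_norm u (e i)
    _ = 1 := by rw [hu, heunit i]; ring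
  have hint : ∀ (μ : Measure I) [IsProbabilityMeasure μ], Integrable f μ := by
    intro μ _
    exact Integrable.mono' (integrable_const 1) hfm.aestronglyMeasurable
      (Filter.Eventually.of_forall fun i => by
        simpa [Real.norm_eq_abs] using hfb i)
  have hints : ∀ (μ : Measure I) [IsProbabilityMeasure μ], Integrable sStar μ := by
    intro μ _
    exact Integrable.mono' (integrable_const 1) hsStar.aestronglyMeasurable
      (Filter.Eventually.of_forall fun i => by
        have h := hsStar01 i
        rw [Real.norm_eq_abs, abs_le]
        constructor <;> [linarith [h.1]; exact h.2])
  have key : ∀ (μ : Measure I) [IsProbabilityMeasure μ],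
      ∫ i, (sStar i - (⟪u, e i⟫ + 1) / 2) ∂μ
        = (∫ i, sStar i ∂μ) - ((∫ i, f i ∂μ) + 1) / 2 := by
    intro μ _
    have h1 : Integrable (fun i => (f i + 1) / 2) μ :=
      (((hint μ).add (integrable_const 1)).div_const 2)
    rw [show (fun i => sStar i - (⟪u, e i⟫ + 1) / 2)
        = fun i => sStar i - (f i + 1) / 2 from rfl]
    rw [integral_sub (hints μ) h1]
    congr 1
    rw [integral_div, integral_add (hint μ) (integrable_const 1),
      integral_const]
    simp
  rw [key μ₁] at hma₁
  rw [key μ₂] at hma₂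
  rw [abs_le] at hma₁ hma₂ ⊢
  constructor <;> nlinarith [hma₁.1, hma₁.2, hma₂.1, hma₂.2]
end

section
/- Let E be a real inner product space, let u ∈ E with ‖u‖ = 1 (the embedding e_P(b) of a base prompt b), and let v_1, v_2 ∈ E be unit vectors (the embeddings e_P(a_1 + b) and e_P(a_2 + b) of the prompt with attributes a_1, a_2 attached). Let e : I → E be a measurable map from a measurable space I into the unit sphere of E, and let μ_1, μ_2 be probability measures on I such that ‖e(i) − v_ℓ‖ ≤ ε holds μ_ℓ-almost everywhere for ℓ = 1, 2. Define s(i) = (⟪u, e(i)⟫ + 1)/2 and let s* : I → [0,1] be measurable. If |∫ (s* − s) dμ_ℓ| ≤ α for ℓ = 1, 2 and ∫ s* dμ_1 = ∫ s* dμ_2, then |⟪u, v_1⟫ − ⟪u, v_2⟫| ≤ 4α + 2ε. -/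
open MeasureTheory
open scoped RealInnerProductSpace

/-- **Theorem 5.4.** Let `u = e_P(b)` be the (unit) base prompt embedding, and let
`v₁, v₂` be the (unit) embeddings of the prompt with attributes `a₁, a₂` attached.
Suppose the image embeddings under `μ_ℓ` lie (a.e.) in an `ε`-ball around `v_ℓ`.
If the auditing function `s(i) = (⟪u, e i⟫ + 1)/2` is `α`-multiaccurate on `μ₁, μ₂`
and the two image distributions have equal average true alignment, then the
attributed prompt embeddings are nearly equidistant (in cosine similarity) from the
base prompt embedding: `|⟪u, v₁⟫ − ⟪u, v₂⟫| ≤ 4α + 2ε`. -/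
theorem multiaccuracy_forces_fair_prompt_embeddings
    {E : Type*} [NormedAddCommGroup E] [InnerProductSpace ℝ E]
    [MeasurableSpace E] [BorelSpace E]
    {I : Type*} [MeasurableSpace I]
    (u : E) (hu : ‖u‖ = 1)
    (v₁ v₂ : E) (hv₁ : ‖v₁‖ = 1) (hv₂ : ‖v₂‖ = 1)
    (e : I → E) (he : Measurable e) (heunit : ∀ i, ‖e i‖ = 1)
    (μ₁ μ₂ : Measure I) [IsProbabilityMeasure μ₁] [IsProbabilityMeasure μ₂]
    (ε : ℝ)
    (hball₁ : ∀ᵐ i ∂μ₁, ‖e i - v₁‖ ≤ ε)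
    (hball₂ : ∀ᵐ i ∂μ₂, ‖e i - v₂‖ ≤ ε)
    (sStar : I → ℝ) (hsStar : Measurable sStar)
    (hsStar01 : ∀ i, sStar i ∈ Set.Icc (0 : ℝ) 1)
    (α : ℝ)
    (hma₁ : |∫ i, (sStar i - (⟪u, e i⟫ + 1) / 2) ∂μ₁| ≤ α)
    (hma₂ : |∫ i, (sStar i - (⟪u, e i⟫ + 1) / 2) ∂μ₂| ≤ α)
    (heq : ∫ i, sStar i ∂μ₁ = ∫ i, sStar i ∂μ₂) :
    |⟪u, v₁⟫ - ⟪u, v₂⟫| ≤ 4 * α + 2 * ε := by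
  set f : I → ℝ := fun i => ⟪u, e i⟫ with hf
  have hfmeas : Measurable f := (innerSL ℝ u).continuous.measurable.comp he
  have hfbd : ∀ i, |f i| ≤ 1 := by
    intro i
    calc |f i| ≤ ‖u‖ * ‖e i‖ := abs_real_inner_le_norm u (e i)
    _ = 1 := by rw [hu, heunit]; ring
  have hsbd : ∀ i, |sStar i| ≤ 1 := by
    intro i
    rcases hsStar01 i with ⟨h0, h1⟩
    rw [abs_le]; constructor <;> linarith
  have hfint : ∀ (μ : Measure I) [IsProbabilityMeasure μ], Integrable f μ := by
    intro μ _
    exact ⟨hfmeas.aestronglyMeasurable,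
      HasFiniteIntegral.of_bounded (C := 1) (ae_of_all _ hfbd)⟩
  have hsint : ∀ (μ : Measure I) [IsProbabilityMeasure μ], Integrable sStar μ := by
    intro μ _
    exact ⟨hsStar.aestronglyMeasurable,
      HasFiniteIntegral.of_bounded (C := 1) (ae_of_all _ hsbd)⟩
  -- rewrite the multiaccuracy integrals
  have hsplit : ∀ (μ : Measure I) [IsProbabilityMeasure μ],
      ∫ i, (sStar i - (f i + 1) / 2) ∂μ = ∫ i, sStar i ∂μ - ((∫ i, f i ∂μ) + 1) / 2 := by
    intro μ _
    have h2 : Integrable (fun i => (f i + 1) / 2) μ :=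
      (((hfint μ).add (integrable_const 1)).div_const 2)
    rw [integral_sub (hsint μ) h2]
    have : ∫ i, (f i + 1) / 2 ∂μ = ((∫ i, f i ∂μ) + 1) / 2 := by
      rw [integral_div, integral_add (hfint μ) (integrable_const 1), integral_const]
      simp
    rw [this]
  have h1 := hma₁; have h2 := hma₂
  rw [hsplit μ₁] at h1
  rw [hsplit μ₂] at h2
  -- ball bounds
  have hball : ∀ (μ : Measure I) [IsProbabilityMeasure μ] (v : E),
      (∀ᵐ i ∂μ, ‖e i - v‖ ≤ ε) → |(∫ i, f i ∂μ) - ⟪u, v⟫| ≤ ε := by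
    intro μ _ v hb
    have : (∫ i, f i ∂μ) - ⟪u, v⟫ = ∫ i, (f i - ⟪u, v⟫) ∂μ := by
      rw [integral_sub (hfint μ) (integrable_const _), integral_const]
      simp
    rw [this]
    have hbd : ∀ᵐ i ∂μ, ‖f i - ⟪u, v⟫‖ ≤ ε := by
      filter_upwards [hb] with i hi
      calc ‖f i - ⟪u, v⟫‖ = |⟪u, e i - v⟫| := by rw [inner_sub_right]; rfl
      _ ≤ ‖u‖ * ‖e i - v‖ := abs_real_inner_le_norm u (e i - v)
      _ ≤ ε := by rw [hu]; linarith
    calc |∫ i, (f i - ⟪u, v⟫) ∂μ| ≤ ∫ _i, ε ∂μ :=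
      norm_integral_le_of_norm_le (integrable_const ε) hbd
    _ = ε := by simp
  have hb1 := hball μ₁ v₁ hball₁
  have hb2 := hball μ₂ v₂ hball₂
  have h1' := abs_le.mp h1
  have h2' := abs_le.mp h2
  have hb1' := abs_le.mp hb1
  have hb2' := abs_le.mp hb2
  rw [abs_sub_le_iff]
  constructor <;> [skip; skip] <;>
  · obtain ⟨a1, a2⟩ := h1'
    obtain ⟨b1, b2⟩ := h2'
    obtain ⟨c1, c2⟩ := hb1'
    obtain ⟨d1, d2⟩ := hb2'
    linarith
end
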